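/- Under event 𝒜, for every sampled vertex v' ∈ V' and every u' ∈ S'^{(√n·k)}_G[k](v'), the k-hop-limited distance in the skeleton graph equals the (√n·k)-hop-limited distance in G: d_{G'}^{(k)}(v',u') = d_G^{(√n k)}(v',u'). -/

import Mathlib

open scoped ENNReal

namespace Stmt7

variable {V : Type*}

/-- Endpoint of a walk starting at `u` with subsequent vertices given by the list. -/
def last : V → List V → V
  | u, [] => u
  | _, x :: xs => last x xs

/-- Weight of a walk starting at `u` with subsequent vertices given by the list. -/
noncomputable def cost (w : V → V → ℝ≥0∞) : V → List V → ℝ≥0∞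
  | _, [] => 0
  | u, x :: xs => w u x + cost w x xs

/-- `h`-hop-limited distance from `u` to `v` (non-edges have weight `⊤`). -/
noncomputable def hdist (w : V → V → ℝ≥0∞) (h : ℕ) (u v : V) : ℝ≥0∞ :=
  ⨅ p ∈ {p : List V | p.length ≤ h ∧ last u p = v}, cost w u p

/-- Shortest-path distance from `u` to `v`. -/
noncomputable def dist (w : V → V → ℝ≥0∞) (u v : V) : ℝ≥0∞ :=
  ⨅ h : ℕ, hdist w h u v

/-- `S` is a set of (at most) `k` closest reachable vertices to `v` (excluding `v`),
with ties broken arbitrarily: members of `S` are reachable and distinct from `v`,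
`|S| ≤ k`, every member is at least as close as every reachable non-member, and `S`
has exactly `k` elements unless it already contains all reachable vertices. -/
def IsKClosest [Fintype V] (w : V → V → ℝ≥0∞) (k : ℕ) (v : V) (S : Finset V) : Prop :=
  (∀ u ∈ S, u ≠ v ∧ dist w v u < ⊤) ∧ S.card ≤ k ∧
  (∀ y ∈ S, ∀ z, z ∉ S → z ≠ v → dist w v z < ⊤ → dist w v y ≤ dist w v z) ∧
  (∀ z, z ∉ S → z ≠ v → dist w v z < ⊤ → S.card = k)

/-- Weight function of the union `G ∪ G^(k)` of the graph with the `k`-shortcut hopset: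
hopset edges `(u,v)` (present when `u ∈ S v` or `v ∈ S u`) get weight `d_G(u,v)`. -/
noncomputable def unionW [Fintype V] [DecidableEq V] (w : V → V → ℝ≥0∞) (S : V → Finset V)
    (u v : V) : ℝ≥0∞ :=
  if u ∈ S v ∨ v ∈ S u then min (w u v) (dist w u v) else w u v


/-- `p` is the canonical `i`-hop-limited shortest `u`–`v` path: it has at most `i`
edges, ends at `v`, has minimum weight (equal to the `i`-limited distance), and among
such paths it has the fewest edges and is lexicographically smallest with respect to
the vertex identifiers `ids` (comparing vertex sequences from the tail `u`). -/
def CanonicalPath (w : V → V → ℝ≥0∞) (ids : V → ℕ) (i : ℕ) (u v : V) (p : List V) : Prop :=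
  p.length ≤ i ∧ last u p = v ∧ cost w u p = hdist w i u v ∧
  ∀ q : List V, q.length ≤ i → last u q = v → cost w u q = hdist w i u v →
    p.length ≤ q.length ∧
    (p.length = q.length → ¬ List.Lex (· < ·) ((u :: q).map ids) ((u :: p).map ids))

/-- Weight function of the skeleton graph `G'` on the sampled set `V'`: an edge
between two sampled vertices has weight equal to the `s`-hop-limited distance in `G`
(`⊤`, i.e. no edge, if they are not connected by an `s`-hop-limited path). -/
noncomputable def skelW [DecidableEq V] (w : V → V → ℝ≥0∞) (V' : Finset V) (s : ℕ)
    (u v : V) : ℝ≥0∞ :=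
  if u ∈ V' ∧ v ∈ V' then hdist w s u v else ⊤

/-- Minimum number of hops of an `i`-hop-limited minimum-weight `u`–`v` path. -/
noncomputable def minHops (w : V → V → ℝ≥0∞) (i : ℕ) (u v : V) : ℕ :=
  sInf {ℓ : ℕ | ∃ p : List V, p.length = ℓ ∧ ℓ ≤ i ∧ last u p = v ∧ cost w u p = hdist w i u v}

/-- Strict comparison of vertices by distance, with ties broken by the tie-breaking
key `tie` (lexicographically). -/
def keyLt (d : V → ℝ≥0∞) (tie : V → ℕ × ℕ) (y z : V) : Prop :=
  Prod.Lex (· < ·) (Prod.Lex (· < ·) (· < ·)) (d y, tie y) (d z, tie z)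

/-- `S` is the set of the `k` closest vertices of `dom` to `v` (excluding `v`) with
respect to the distance function `d`, with ties broken by the key `tie`: members are
reachable, `|S| ≤ k`, every member strictly precedes every reachable non-member, and
`S` has exactly `k` elements unless it contains all reachable vertices of `dom`. -/
def IsKNear (d : V → ℝ≥0∞) (tie : V → ℕ × ℕ) (dom : Finset V) (k : ℕ) (v : V)
    (S : Finset V) : Prop :=
  S ⊆ dom ∧ v ∉ S ∧ S.card ≤ k ∧ (∀ y ∈ S, d y < ⊤) ∧
  (∀ y ∈ S, ∀ z ∈ dom, z ∉ S → z ≠ v → d z < ⊤ → keyLt d tie y z) ∧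
  (∀ z ∈ dom, z ≠ v → d z < ⊤ → z ∉ S → S.card = k)


section Lemmas
variable {w : V → V → ℝ≥0∞} {u v y z : V} {p q : List V} {h h' a b : ℕ}

@[simp] lemma last_nil (u : V) : last u ([] : List V) = u := rfl
@[simp] lemma last_cons (u x : V) (xs : List V) : last u (x :: xs) = last x xs := rfl
@[simp] lemma cost_nil (w : V → V → ℝ≥0∞) (u : V) : cost w u [] = 0 := rfl
@[simp] lemma cost_cons (w : V → V → ℝ≥0∞) (u x : V) (xs : List V) :
    cost w u (x :: xs) = w u x + cost w x xs := rfl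

lemma last_append (u : V) (p q : List V) : last u (p ++ q) = last (last u p) q := by
  induction p generalizing u with
  | nil => simp
  | cons x xs ih => simp [ih]

lemma last_concat (u x : V) (p : List V) : last u (p ++ [x]) = x := by
  simp [last_append]

lemma cost_append (w : V → V → ℝ≥0∞) (u : V) (p q : List V) :
    cost w u (p ++ q) = cost w u p + cost w (last u p) q := by
  induction p generalizing u with
  | nil => simp
  | cons x xs ih => simp [ih, add_assoc]

lemma hdist_le_cost (hl : p.length ≤ h) (he : last u p = v) : hdist w h u v ≤ cost w u p :=
  iInf₂_le p ⟨hl, he⟩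

lemma hdist_anti (hh : h ≤ h') : hdist w h' u v ≤ hdist w h u v :=
  le_iInf₂ fun p hp => hdist_le_cost (hp.1.trans hh) hp.2

lemma hdist_self : hdist w h u u = 0 := by
  refine le_antisymm ?_ zero_le
  have := hdist_le_cost (w := w) (h := h) (u := u) (v := u) (p := []) (Nat.zero_le h) rfl
  simpa using this

lemma hdist_triangle : hdist w (a + b) u z ≤ hdist w a u y + hdist w b y z := by
  have e1 : hdist w a u y = ⨅ p : {p : List V // p.length ≤ a ∧ last u p = y}, cost w u p.1 := by
    rw [hdist, iInf_subtype']; rfl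
  have e2 : hdist w b y z = ⨅ q : {q : List V // q.length ≤ b ∧ last y q = z}, cost w y q.1 := by
    rw [hdist, iInf_subtype']; rfl
  rw [e1, e2, ENNReal.iInf_add]
  refine le_iInf fun p => ?_
  rw [ENNReal.add_iInf]
  refine le_iInf fun q => ?_
  have hlast : last u (p.1 ++ q.1) = z := by rw [last_append, p.2.2, q.2.2]
  have := hdist_le_cost (w := w) (h := a + b)
    (p := p.1 ++ q.1) (by simp [add_le_add p.2.1 q.2.1]) hlast
  rwa [cost_append, p.2.2] at this

lemma lex_append_left {r : ℕ → ℕ → Prop} (s : List ℕ) {t1 t2 : List ℕ}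
    (h : List.Lex r t1 t2) : List.Lex r (s ++ t1) (s ++ t2) := by
  induction s with
  | nil => exact h
  | cons x xs ih => exact List.Lex.cons ih

lemma lex_append_right {r : ℕ → ℕ → Prop} {A B C D : List ℕ}
    (h : List.Lex r A B) (hlen : A.length = B.length) :
    List.Lex r (A ++ C) (B ++ D) := by
  induction h with
  | nil => simp at hlen
  | @cons a as bs _ ih => exact List.Lex.cons (ih (by simpa using hlen))
  | rel hab => exact List.Lex.rel hab

lemma lex_cons_inv {a : ℕ} {A B : List ℕ} (h : List.Lex (·<·) (a :: A) (a :: B)) :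
    List.Lex (·<·) A B := by
  cases h with
  | cons h => exact h
  | rel hab => exact absurd hab (lt_irrefl a)

lemma lex_trichotomy (A B : List ℕ) (h : A ≠ B) :
    List.Lex (·<·) A B ∨ List.Lex (·<·) B A := by
  have ht : IsTrichotomous (List ℕ) (List.Lex (·<·)) := by infer_instance
  by_cases h1 : List.Lex (·<·) A B
  · exact Or.inl h1
  by_cases h2 : List.Lex (·<·) B A
  · exact Or.inr h2
  exact absurd (ht.1 A B h1 h2) h

variable {ids : V → ℕ} {i : ℕ}

lemma canonical_unique (hids : Function.Injective ids)
    (hp : CanonicalPath w ids i u v p) (hq : CanonicalPath w ids i u v q) : p = q := by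
  by_contra hne
  have h1 := hp.2.2.2 q hq.1 hq.2.1 hq.2.2.1
  have h2 := hq.2.2.2 p hp.1 hp.2.1 hp.2.2.1
  have hlen : p.length = q.length := le_antisymm h1.1 h2.1
  have hmapne : ((u :: p).map ids) ≠ ((u :: q).map ids) := fun hc => by
    have : (u :: p) = (u :: q) := (List.map_injective_iff.2 hids) hc
    exact hne (by simpa using this)
  rcases lex_trichotomy _ _ hmapne with hl | hl
  · exact h2.2 hlen.symm hl
  · exact h1.2 hlen hl

lemma canonical_restrict (hp : CanonicalPath w ids i u v p) :
    CanonicalPath w ids p.length u v p ∧ hdist w p.length u v = hdist w i u v := by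
  have hle : hdist w p.length u v ≤ cost w u p := hdist_le_cost le_rfl hp.2.1
  have hge : hdist w i u v ≤ hdist w p.length u v := hdist_anti hp.1
  have heq : hdist w p.length u v = hdist w i u v :=
    le_antisymm (hp.2.2.1 ▸ hle) hge
  refine ⟨⟨le_rfl, hp.2.1, hp.2.2.1.trans heq.symm, fun q hq1 hq2 hq3 => ?_⟩, heq⟩
  exact hp.2.2.2 q (hq1.trans hp.1) hq2 (hq3.trans heq)

lemma last_middle (u a : V) (B C : List V) : last u (B ++ a :: C) = last a C := by
  rw [show B ++ a :: C = (B ++ [a]) ++ C from by simp, last_append, last_concat]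

lemma cost_middle (w : V → V → ℝ≥0∞) (u a : V) (B C : List V) :
    cost w u (B ++ a :: C) = cost w u (B ++ [a]) + cost w a C := by
  rw [show B ++ a :: C = (B ++ [a]) ++ C from by simp, cost_append, last_concat]

lemma sublist_pair_decomp {a : V} : ∀ {l : List V}, [a,a].Sublist l →
    ∃ A B C : List V, l = A ++ a :: (B ++ a :: C) := by
  intro l h
  induction l with
  | nil => cases h
  | cons x xs ih =>
    cases h with
    | cons h' =>
      rename_i h''
      obtain ⟨A, B, C, rfl⟩ := ih h''
      exact ⟨x :: A, B, C, rfl⟩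
    | cons_cons h' =>
      rename_i h''
      obtain ⟨s, t, rfl⟩ := List.append_of_mem (List.singleton_sublist.1 h'')
      exact ⟨[], s, t, rfl⟩

lemma canonical_nodup (hp : CanonicalPath w ids i u v p) : (u :: p).Nodup := by
  by_contra hnd
  rw [List.nodup_iff_sublist] at hnd
  push_neg at hnd
  obtain ⟨a, ha⟩ := hnd
  obtain ⟨A, B, C, hABC⟩ := sublist_pair_decomp ha
  obtain ⟨q, hqlen, hqlast, hqcost⟩ :
      ∃ q : List V, q.length < p.length ∧ last u q = v ∧ cost w u q ≤ cost w u p := by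
    cases A with
    | nil =>
      simp only [List.nil_append] at hABC
      injection hABC with h1 h2
      subst h1 h2
      refine ⟨C, by simp; omega, ?_, ?_⟩
      · rw [← hp.2.1, last_middle]
      · rw [cost_middle]; exact le_add_self
    | cons x A' =>
      rw [List.cons_append] at hABC
      injection hABC with h1 h2
      subst h1 h2
      refine ⟨A' ++ a :: C, by simp, ?_, ?_⟩
      · rw [last_middle u a A' C, ← hp.2.1, last_middle u a A' (B ++ a :: C),
          last_middle a a B C]
      · rw [cost_middle w u a A' C, cost_middle w u a A' (B ++ a :: C), cost_middle w a a B C]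
        exact add_le_add_right le_add_self _
  have hcost : cost w u q = hdist w i u v :=
    le_antisymm (hp.2.2.1 ▸ hqcost) (hdist_le_cost (hqlen.le.trans hp.1) hqlast)
  have := (hp.2.2.2 q (hqlen.le.trans hp.1) hqlast hcost).1
  omega


lemma ennreal_cancel {a b c d : ℝ≥0∞} (h1 : a ≤ c) (h2 : b ≤ d) (h3 : c + d ≤ a + b)
    (hc : c < ⊤) (hd : d < ⊤) : a = c ∧ b = d := by
  have hca : c ≤ a := (ENNReal.add_le_add_iff_right hd.ne).mp
    (h3.trans (add_le_add_right h2 a))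
  have hdb : d ≤ b := (ENNReal.add_le_add_iff_left hc.ne).mp
    (h3.trans (add_le_add_left h1 b))
  exact ⟨le_antisymm h1 hca, le_antisymm h2 hdb⟩

lemma eq_dropLast_concat (u : V) : ∀ (p : List V), p ≠ [] → p = p.dropLast ++ [last u p] := by
  intro p
  induction p generalizing u with
  | nil => intro h; exact absurd rfl h
  | cons y ys ih =>
    intro _
    cases ys with
    | nil => rfl
    | cons z zs =>
      have := ih (u := y) (by simp)
      rw [last_cons, List.dropLast_cons₂, List.cons_append, ← this]

lemma split_canonical {q1 q2 : List V}
    (hp : CanonicalPath w ids (q1.length + q2.length) u v (q1 ++ q2))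
    (hfin : cost w u (q1 ++ q2) < ⊤) :
    cost w u q1 = hdist w q1.length u (last u q1) ∧
    cost w (last u q1) q2 = hdist w q2.length (last u q1) v ∧
    CanonicalPath w ids q1.length u (last u q1) q1 ∧
    CanonicalPath w ids q2.length (last u q1) v q2 := by
  set x := last u q1 with hx
  have hv2 : last x q2 = v := by rw [← hp.2.1, last_append]
  have hc : cost w u (q1 ++ q2) = cost w u q1 + cost w x q2 := cost_append w u q1 q2
  rw [hc] at hfin
  have hfin1 : cost w u q1 < ⊤ := le_self_add.trans_lt hfin
  have hfin2 : cost w x q2 < ⊤ := le_add_self.trans_lt hfin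
  have t1 : hdist w q1.length u x ≤ cost w u q1 := hdist_le_cost le_rfl hx.symm
  have t2 : hdist w q2.length x v ≤ cost w x q2 := hdist_le_cost le_rfl hv2
  have htot : cost w u q1 + cost w x q2 = hdist w (q1.length + q2.length) u v := by
    rw [← hc]; exact hp.2.2.1
  have h3 : cost w u q1 + cost w x q2
      ≤ hdist w q1.length u x + hdist w q2.length x v :=
    htot.trans_le hdist_triangle
  obtain ⟨e1, e2⟩ := ennreal_cancel t1 t2 h3 hfin1 hfin2
  refine ⟨e1.symm, e2.symm, ⟨le_rfl, hx.symm, e1.symm, ?_⟩, ⟨le_rfl, hv2, e2.symm, ?_⟩⟩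
  · intro q hq1 hq2 hq3
    have hrlen : (q ++ q2).length ≤ q1.length + q2.length := by simp; omega
    have hrlast : last u (q ++ q2) = v := by rw [last_append, hq2, hv2]
    have hrcost : cost w u (q ++ q2) = hdist w (q1.length + q2.length) u v := by
      rw [cost_append, hq2, hq3, e1, htot]
    have hmain := hp.2.2.2 (q ++ q2) hrlen hrlast hrcost
    have hlen1 := hmain.1
    simp only [List.length_append] at hlen1
    refine ⟨by omega, fun hql hlex => ?_⟩
    have hlex2 := lex_append_right (C := q2.map ids) (D := q2.map ids) hlex (by simp [hql])
    refine hmain.2 (by simp [hql]) ?_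
    simpa [List.map_append] using hlex2
  · intro q hq1 hq2 hq3
    have hrlen : (q1 ++ q).length ≤ q1.length + q2.length := by simp; omega
    have hrlast : last u (q1 ++ q) = v := by rw [last_append, ← hx, hq2]
    have hrcost : cost w u (q1 ++ q) = hdist w (q1.length + q2.length) u v := by
      rw [cost_append, ← hx, hq3, e2, htot]
    have hmain := hp.2.2.2 (q1 ++ q) hrlen hrlast hrcost
    have hlen1 := hmain.1
    simp only [List.length_append] at hlen1
    refine ⟨by omega, fun hql hlex => ?_⟩
    have hlex' : List.Lex (·<·) (ids x :: q.map ids) (ids x :: q2.map ids) := by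
      simpa using hlex
    have hlex2 := lex_append_left ((u :: q1).map ids) (lex_cons_inv hlex')
    refine hmain.2 (by simp [hql]) ?_
    simpa [List.map_append] using hlex2

lemma cost_skel_ge [DecidableEq V] (V' : Finset V) (s : ℕ) :
    ∀ (p : List V) (x : V), hdist w (s * p.length) x (last x p) ≤ cost (skelW w V' s) x p := by
  intro p
  induction p with
  | nil => intro x; simp [hdist_self]
  | cons y ys ih =>
    intro x
    have hsplit : s * (y :: ys).length = s + s * ys.length := by simp [Nat.mul_succ, Nat.mul_add]; ring
    rw [last_cons, cost_cons, hsplit]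
    refine hdist_triangle.trans (add_le_add ?_ (ih y))
    rw [skelW]
    split
    · exact le_rfl
    · exact le_top


lemma key_lemma [DecidableEq V]
    {w : V → V → ℝ≥0∞} {ids : V → ℕ} (hids : Function.Injective ids) {n : ℕ}
    {P : ℕ → V → V → List V}
    (hP : ∀ i u v, hdist w i u v < ⊤ → CanonicalPath w ids i u v (P i u v))
    {V' : Finset V}
    (hA : ∀ i u v, hdist w i u v < ⊤ → Nat.sqrt n ≤ (P i u v).length →
      ∃ x ∈ (P i u v).dropLast, x ∈ V') :
    ∀ L (p : List V) (x : V), p.length ≤ L → x ∈ V' → last x p ∈ V' →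
      cost w x p < ⊤ → CanonicalPath w ids p.length x (last x p) p →
      hdist (skelW w V' (Nat.sqrt n)) ((p.dropLast.filter (· ∈ V')).length + 1) x (last x p)
        ≤ cost w x p := by
  intro L
  induction L with
  | zero =>
    intro p x hL _ _ _ _
    obtain rfl : p = [] := List.length_eq_zero_iff.mp (Nat.le_zero.mp hL)
    simp [hdist_self]
  | succ L ih =>
    intro p x hL hx hb hfin hcan
    rcases eq_or_ne p [] with rfl | hpne
    · simp [hdist_self]
    have hcost_eq : cost w x p = hdist w p.length x (last x p) := hcan.2.2.1
    have hfin' : hdist w p.length x (last x p) < ⊤ := hcost_eq ▸ hfin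
    have hPeq : P p.length x (last x p) = p :=
      canonical_unique hids (hP _ _ _ hfin') hcan
    by_cases hsamp : ∃ x1 ∈ p.dropLast, x1 ∈ V'
    · obtain ⟨x1, hx1mem, hx1V⟩ := hsamp
      obtain ⟨q1', q2', hsplit⟩ := List.append_of_mem hx1mem
      have hpdecomp : p = (q1' ++ [x1]) ++ (q2' ++ [last x p]) := by
        conv_lhs => rw [eq_dropLast_concat x p hpne]
        rw [hsplit]; simp
      set q1 : List V := q1' ++ [x1] with hq1def
      set q2 : List V := q2' ++ [last x p] with hq2def
      have hq1last : last x q1 = x1 := last_concat x x1 q1'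
      have hq2last : last x1 q2 = last x p := last_concat x1 (last x p) q2'
      have hlen : p.length = q1.length + q2.length := by rw [hpdecomp]; simp
      have hcan' : CanonicalPath w ids (q1.length + q2.length) x (last x p) (q1 ++ q2) := by
        rw [← hlen, ← hpdecomp]; exact hcan
      have hfin2 : cost w x (q1 ++ q2) < ⊤ := by rw [← hpdecomp]; exact hfin
      obtain ⟨e1, e2, hc1, hc2⟩ := split_canonical hcan' hfin2
      rw [hq1last] at e1 e2 hc1 hc2
      -- recursive bounds
      have hlt1 : q1.length ≤ L := by
        have : q2.length ≥ 1 := by rw [hq2def]; simp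
        omega
      have hlt2 : q2.length ≤ L := by
        have : q1.length ≥ 1 := by rw [hq1def]; simp
        omega
      have hfin1' : cost w x q1 < ⊤ := by
        rw [hpdecomp, cost_append w x q1 q2] at hfin
        exact le_self_add.trans_lt hfin
      have hfin2' : cost w x1 q2 < ⊤ := by
        rw [hpdecomp, cost_append w x q1 q2, hq1last] at hfin
        exact le_add_self.trans_lt hfin
      have ih1 := ih q1 x hlt1 hx (by rw [hq1last]; exact hx1V) hfin1' (by rw [hq1last]; exact hc1)
      have ih2 := ih q2 x1 hlt2 hx1V (by rw [hq2last]; exact hb) hfin2'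
        (by rw [hq2last]; exact hc2)
      rw [hq1last] at ih1
      rw [hq2last] at ih2
      -- counting
      have hcount : (p.dropLast.filter (· ∈ V')).length
          = ((q1.dropLast.filter (· ∈ V')).length + 1)
            + (q2.dropLast.filter (· ∈ V')).length := by
        rw [hsplit, hq1def, hq2def, List.dropLast_concat, List.dropLast_concat]
        simp [List.filter_append, hx1V]
        omega
      have htri : hdist (skelW w V' (Nat.sqrt n))
            (((q1.dropLast.filter (· ∈ V')).length + 1)
              + ((q2.dropLast.filter (· ∈ V')).length + 1)) x (last x p)
          ≤ cost w x p := by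
        refine (hdist_triangle (y := x1)).trans ?_
        calc hdist (skelW w V' (Nat.sqrt n)) ((q1.dropLast.filter (· ∈ V')).length + 1) x x1
              + hdist (skelW w V' (Nat.sqrt n)) ((q2.dropLast.filter (· ∈ V')).length + 1) x1
                (last x p)
            ≤ cost w x q1 + cost w x1 q2 := add_le_add ih1 ih2
          _ = cost w x p := by rw [hpdecomp, cost_append w x q1 q2, hq1last]
      rw [show (p.dropLast.filter (· ∈ V')).length + 1
          = ((q1.dropLast.filter (· ∈ V')).length + 1)
            + ((q2.dropLast.filter (· ∈ V')).length + 1) by omega]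
      exact htri
    · -- no sampled internal vertex : short path, single skeleton edge
      have hshort : p.length ≤ Nat.sqrt n := by
        by_contra hlong
        obtain ⟨x1, h1, h2⟩ := hA p.length x (last x p) hfin' (by rw [hPeq]; omega)
        rw [hPeq] at h1
        exact hsamp ⟨x1, h1, h2⟩
      have hedge : skelW w V' (Nat.sqrt n) x (last x p) ≤ cost w x p := by
        rw [skelW, if_pos ⟨hx, hb⟩]
        exact hdist_le_cost hshort rfl
      have h1 : hdist (skelW w V' (Nat.sqrt n)) ((p.dropLast.filter (· ∈ V')).length + 1) x
            (last x p) ≤ cost (skelW w V' (Nat.sqrt n)) x [last x p] :=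
        hdist_le_cost (by simp) (by simp)
      simpa using h1.trans (by simpa using hedge)

end Lemmas

/-- Under event 𝒜, for every sampled `v'` and every `u'` among the `k` closest
sampled vertices to `v'` under `(√n·k)`-limited distance in `G`, the `k`-hop-limited
distance in the skeleton graph equals the `(√n·k)`-hop-limited distance in `G`. -/
theorem skeleton_hdist_eq [Fintype V] [DecidableEq V]
    (w : V → V → ℝ≥0∞) (hsymm : ∀ u v, w u v = w v u)
    (n : ℕ) (hn : n = Fintype.card V)
    (ids : V → ℕ) (hids : Function.Injective ids)
    (P : ℕ → V → V → List V)
    (hP : ∀ i u v, hdist w i u v < ⊤ → CanonicalPath w ids i u v (P i u v))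
    (V' : Finset V)
    (hA : ∀ i u v, hdist w i u v < ⊤ → Nat.sqrt n ≤ (P i u v).length →
      ∃ x ∈ (P i u v).dropLast, x ∈ V')
    (k : ℕ) (hk : 1 ≤ k)
    (v' : V) (hv' : v' ∈ V')
    (S : Finset V)
    (hS : IsKNear (hdist w (Nat.sqrt n * k) v')
      (fun x => (minHops w (Nat.sqrt n * k) v' x, ids x)) V' k v' S)
    (u' : V) (hu' : u' ∈ S) :
    hdist (skelW w V' (Nat.sqrt n)) k v' u' = hdist w (Nat.sqrt n * k) v' u' := by
  classical
  obtain ⟨hSsub, hvS, hScard, hSfin, hSlt, hSfull⟩ := hS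
  have hu'V : u' ∈ V' := hSsub hu'
  have hu'ne : u' ≠ v' := fun h => hvS (h ▸ hu')
  have hdfin : hdist w (Nat.sqrt n * k) v' u' < ⊤ := hSfin u' hu'
  -- direction 1 : G-distance ≤ skeleton distance
  have dir1 : hdist w (Nat.sqrt n * k) v' u' ≤ hdist (skelW w V' (Nat.sqrt n)) k v' u' := by
    refine le_iInf₂ fun p hp => ?_
    have h1 := cost_skel_ge (w := w) V' (Nat.sqrt n) p v'
    rw [hp.2] at h1
    exact (hdist_anti (Nat.mul_le_mul le_rfl hp.1)).trans h1
  -- canonical path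
  have hcanP := hP (Nat.sqrt n * k) v' u' hdfin
  set p := P (Nat.sqrt n * k) v' u' with hpdef
  have hlastp : last v' p = u' := hcanP.2.1
  have hcostp : cost w v' p = hdist w (Nat.sqrt n * k) v' u' := hcanP.2.2.1
  have hfinp : cost w v' p < ⊤ := by rw [hcostp]; exact hdfin
  obtain ⟨hcanp, hdeq⟩ := canonical_restrict hcanP
  have hpne : p ≠ [] := by
    intro h
    rw [h] at hlastp
    exact hu'ne (by simpa using hlastp.symm)
  have hnodup : (v' :: p).Nodup := canonical_nodup hcanP
  have hvnp : v' ∉ p := (List.nodup_cons.mp hnodup).1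
  have hpnd : p.Nodup := (List.nodup_cons.mp hnodup).2
  have hpdecomp : p = p.dropLast ++ [u'] := by
    conv_lhs => rw [eq_dropLast_concat v' p hpne]
    rw [hlastp]
  -- minHops of u'
  have hmhu : minHops w (Nat.sqrt n * k) v' u' = p.length := by
    refine le_antisymm (Nat.sInf_le ⟨p, rfl, hcanP.1, hlastp, hcostp⟩) ?_
    refine le_csInf ⟨p.length, p, rfl, hcanP.1, hlastp, hcostp⟩ fun ℓ hℓ => ?_
    obtain ⟨q, rfl, h1, h2, h3⟩ := hℓ
    exact (hcanP.2.2.2 q h1 h2 h3).1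
  -- every sampled internal vertex is in S.erase u'
  have hmem : ∀ x ∈ p.dropLast, x ∈ V' → x ∈ S.erase u' := by
    intro x hxdrop hxV
    have hxp : x ∈ p := (List.dropLast_sublist p).mem hxdrop
    have hxv : x ≠ v' := fun h => hvnp (h ▸ hxp)
    have hxu : x ≠ u' := by
      have hdisj := List.disjoint_of_nodup_append (hpdecomp ▸ hpnd)
      intro h
      exact hdisj hxdrop (by simp [h])
    -- split p at x
    obtain ⟨q1', q2', hsplit⟩ := List.append_of_mem hxdrop
    have hdec2 : p = (q1' ++ [x]) ++ (q2' ++ [u']) := by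
      conv_lhs => rw [eq_dropLast_concat v' p hpne]
      rw [hsplit, hlastp]; simp
    have hlen2 : p.length = (q1' ++ [x]).length + (q2' ++ [u']).length := by
      rw [hdec2]; simp; omega
    have hcan2 : CanonicalPath w ids ((q1' ++ [x]).length + (q2' ++ [u']).length) v' u'
        ((q1' ++ [x]) ++ (q2' ++ [u'])) := by
      rw [← hlen2, ← hdec2]; exact hcanp
    have hfin2 : cost w v' ((q1' ++ [x]) ++ (q2' ++ [u'])) < ⊤ := by
      rw [← hdec2]; exact hfinp
    obtain ⟨e1, _, _, _⟩ := split_canonical hcan2 hfin2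
    rw [last_concat] at e1
    -- e1 : cost w v' (q1' ++ [x]) = hdist w (q1'++[x]).length v' x
    have hq1le : (q1' ++ [x]).length ≤ Nat.sqrt n * k := by
      have h := hcanP.1
      rw [hlen2] at h
      omega
    have hcost_le : cost w v' (q1' ++ [x]) ≤ hdist w (Nat.sqrt n * k) v' u' := by
      calc cost w v' (q1' ++ [x]) ≤ cost w v' p := by
            conv_rhs => rw [hdec2, cost_append w v' (q1' ++ [x]) (q2' ++ [u'])]
            exact le_self_add
        _ = _ := hcostp
    have hdx_le : hdist w (Nat.sqrt n * k) v' x ≤ cost w v' (q1' ++ [x]) :=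
      (hdist_anti hq1le).trans e1.ge
    have hdxfin : hdist w (Nat.sqrt n * k) v' x < ⊤ :=
      (hdx_le.trans hcost_le).trans_lt hdfin
    by_contra hxS
    have hxS' : x ∉ S := fun h => hxS (Finset.mem_erase.mpr ⟨hxu, h⟩)
    have hklt := hSlt u' hu' x hxV hxS' hxv hdxfin
    simp only [keyLt, Prod.lex_def] at hklt
    have hdx_du : hdist w (Nat.sqrt n * k) v' x ≤ hdist w (Nat.sqrt n * k) v' u' :=
      hdx_le.trans hcost_le
    rcases hklt with hlt | ⟨heq, hinner⟩
    · exact absurd (hdx_du.trans_lt hlt) (lt_irrefl _)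
    · -- tie on distance; compare minHops
      have hcq1 : cost w v' (q1' ++ [x]) = hdist w (Nat.sqrt n * k) v' x :=
        le_antisymm (hcost_le.trans_eq heq) hdx_le
      have hmhx : minHops w (Nat.sqrt n * k) v' x ≤ (q1' ++ [x]).length :=
        Nat.sInf_le ⟨q1' ++ [x], rfl, hq1le, last_concat _ _ _, hcq1⟩
      have hlt2 : (q1' ++ [x]).length < p.length := by
        rw [hlen2]; simp
      simp only [Prod.lex_def, hmhu] at hinner
      rcases hinner with h | ⟨h, _⟩
      · omega
      · omega
  -- the count of sampled internal vertices is at most k - 1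
  have hcnt : (p.dropLast.filter (· ∈ V')).length + 1 ≤ k := by
    have hndf : (p.dropLast.filter (· ∈ V')).Nodup :=
      (((List.filter_sublist).trans (List.dropLast_sublist p)).nodup hpnd)
    have hsub : (p.dropLast.filter (· ∈ V')).toFinset ⊆ S.erase u' := by
      intro x hx
      rw [List.mem_toFinset, List.mem_filter] at hx
      exact hmem x hx.1 (by simpa using hx.2)
    have hlen : (p.dropLast.filter (· ∈ V')).length ≤ (S.erase u').card := by
      rw [← List.toFinset_card_of_nodup hndf]
      exact Finset.card_le_card hsub
    have hcard : (S.erase u').card = S.card - 1 := Finset.card_erase_of_mem hu'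
    have hSpos : 1 ≤ S.card := Finset.card_pos.mpr ⟨u', hu'⟩
    omega
  -- apply the key lemma
  have hkey := key_lemma hids hP hA p.length p v' le_rfl hv'
    (by rw [hlastp]; exact hu'V) hfinp (by rw [hlastp]; exact hcanp)
  rw [hlastp] at hkey
  have dir2 : hdist (skelW w V' (Nat.sqrt n)) k v' u' ≤ hdist w (Nat.sqrt n * k) v' u' :=
    (hdist_anti hcnt).trans (hkey.trans_eq hcostp)
  exact le_antisymm dir2 dir1


end Stmt7
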